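/- arXiv:2408.03820 — 2 statements merged into one kernel-verified Lean document; each statement's English description precedes it below -/
import Mathlib

section
/- Let T ⊆ ℝ be an interval, f, h : T → ℝ continuous with f(t) > h(t) for all t ∈ T, and g₊ : T × ℝ → ℝ continuous, strictly positive, and locally Lipschitz in its second variable. Suppose y_f, y_h are differentiable on T with y_f'(t) = f(t)·g₊(t, y_f(t)) and y_h'(t) = h(t)·g₊(t, y_h(t)). If y_f(s) > y_h(s) for some s ∈ T, then y_f(t) > y_h(t) for all t ∈ T with t ≥ s. -/
open Topology Filter


/-- Multiplicative Estimation: solutions of ODEs whose right-hand sides differ by a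
multiplicative factor, with common strictly positive factor `g₊`. -/
theorem multiplicative_estimation
    (T : Set ℝ) (hT : T.OrdConnected)
    (f h : ℝ → ℝ) (hf : ContinuousOn f T) (hh : ContinuousOn h T)
    (hfh : ∀ t ∈ T, h t < f t)
    (g : ℝ → ℝ → ℝ)
    (hg_cont : Continuous (fun p : ℝ × ℝ => g p.1 p.2))
    (hg_pos : ∀ t x, 0 < g t x)
    (hg_lip : ∀ t, LocallyLipschitz (g t))
    (yf yh : ℝ → ℝ)
    (hyf : ∀ t ∈ T, HasDerivAt yf (f t * g t (yf t)) t)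
    (hyh : ∀ t ∈ T, HasDerivAt yh (h t * g t (yh t)) t)
    (s : ℝ) (hs : s ∈ T) (hinit : yh s < yf s) :
    ∀ t ∈ T, s ≤ t → yh t < yf t := by
  intro t ht hst
  by_contra hcon
  push_neg at hcon
  set φ : ℝ → ℝ := fun u => yf u - yh u with hφdef
  have hsub : Set.Icc s t ⊆ T := hT.out hs ht
  have hφderiv : ∀ u ∈ T,
      HasDerivAt φ (f u * g u (yf u) - h u * g u (yh u)) u :=
    fun u hu => (hyf u hu).sub (hyh u hu)
  have hφcont : ContinuousOn φ (Set.Icc s t) := fun u hu =>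
    ((hφderiv u (hsub hu)).continuousAt).continuousWithinAt
  set S : Set ℝ := {u ∈ Set.Icc s t | φ u ≤ 0} with hSdef
  have hSne : S.Nonempty := ⟨t, ⟨hst, le_rfl⟩, sub_nonpos.mpr hcon⟩
  have hScl : IsClosed S :=
    hφcont.preimage_isClosed_of_isClosed isClosed_Icc isClosed_Iic
  have hSbdd : BddBelow S := ⟨s, fun u hu => hu.1.1⟩
  set t₀ := sInf S with ht₀def
  have ht₀S : t₀ ∈ S := hScl.csInf_mem hSne hSbdd
  have ht₀Icc : t₀ ∈ Set.Icc s t := ht₀S.1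
  have ht₀T : t₀ ∈ T := hsub ht₀Icc
  have hst₀ : s < t₀ := by
    rcases lt_or_eq_of_le ht₀Icc.1 with h' | h'
    · exact h'
    · exfalso; rw [← h'] at ht₀S
      exact absurd ht₀S.2 (not_le.mpr (sub_pos.mpr hinit))
  have hpos : ∀ u ∈ Set.Ico s t₀, 0 < φ u := by
    intro u hu
    by_contra hneg
    push_neg at hneg
    have huS : u ∈ S := ⟨⟨hu.1, hu.2.le.trans ht₀Icc.2⟩, hneg⟩
    exact absurd (csInf_le hSbdd huS) (not_le.mpr hu.2)
  -- φ t₀ = 0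
  have hnb : (𝓝[Set.Ico s t₀] t₀).NeBot := by
    refine mem_closure_iff_nhdsWithin_neBot.mp ?_
    rw [closure_Ico hst₀.ne]
    exact ⟨hst₀.le, le_rfl⟩
  have htends : Filter.Tendsto φ (𝓝[Set.Ico s t₀] t₀) (𝓝 (φ t₀)) := by
    have := (hφcont t₀ ht₀Icc).tendsto
    exact this.mono_left (nhdsWithin_mono _ (fun u hu =>
      ⟨hu.1, hu.2.le.trans ht₀Icc.2⟩))
  have hge : 0 ≤ φ t₀ :=
    ge_of_tendsto htends (eventually_mem_nhdsWithin.mono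
      fun u hu => (hpos u hu).le)
  have hφt₀ : φ t₀ = 0 := le_antisymm ht₀S.2 hge
  have hyfyh : yh t₀ = yf t₀ := by
    have := sub_eq_zero.mp hφt₀; linarith
  -- derivative at t₀ is positive
  have hD : HasDerivAt φ ((f t₀ - h t₀) * g t₀ (yf t₀)) t₀ := by
    have := hφderiv t₀ ht₀T
    rw [hyfyh] at this
    convert this using 1; ring
  have hDpos : 0 < (f t₀ - h t₀) * g t₀ (yf t₀) :=
    mul_pos (sub_pos.mpr (hfh t₀ ht₀T)) (hg_pos _ _)
  have hslope : Filter.Tendsto (slope φ t₀) (𝓝[<] t₀)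
      (𝓝 ((f t₀ - h t₀) * g t₀ (yf t₀))) :=
    (hasDerivAt_iff_tendsto_slope.mp hD).mono_left
      (nhdsWithin_mono _ (fun u hu => ne_of_lt hu))
  have hev : ∀ᶠ u in 𝓝[<] t₀, 0 < slope φ t₀ u :=
    hslope.eventually (lt_mem_nhds hDpos)
  have hev2 : ∀ᶠ u in 𝓝[<] t₀, u ∈ Set.Ioo s t₀ :=
    Filter.eventually_of_mem (Ioo_mem_nhdsLT_of_mem ⟨hst₀, le_rfl⟩) (fun u hu => hu)
  obtain ⟨u, hu1, hu2⟩ := (hev.and hev2).exists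
  have hφu : φ u < 0 := by
    have hslope_eq : slope φ t₀ u = φ u / (u - t₀) := by
      rw [slope_def_field, hφt₀]; ring
    rw [hslope_eq] at hu1
    have hd : u - t₀ < 0 := sub_neg.mpr hu2.2
    rcases div_pos_iff.mp hu1 with ⟨h1, h2⟩ | ⟨h1, h2⟩
    · linarith
    · exact h1
  exact absurd hφu (not_lt.mpr (hpos u ⟨hu2.1.le, hu2.2⟩).le)
end

section
/- Under the hypotheses of the previous statement and additionally assuming v(t) → 0 as t → ∞ (e.g. v(t) = r'd'/(r't + d')), every solution L of L'(t) = −k₇·v(t)·(L(t) − L_min) + k₈·(L_max − L(t)) converges to L_max as t → ∞. -/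
open Real Filter MeasureTheory intervalIntegral

/-- Long-time behaviour of the lattice spacing model (1g): if the ion release rate
tends to zero, the lattice spacing recovers to `L_max`. -/
theorem lattice_spacing_recovery (v : ℝ → ℝ) (hvc : Continuous v)
    (hvnn : ∀ t ≥ (0:ℝ), 0 ≤ v t)
    (hv0 : Filter.Tendsto v Filter.atTop (nhds 0))
    (k₇ k₈ Lmin Lmax : ℝ) (hk₇ : 0 < k₇) (hk₈ : 0 < k₈)
    (hLmin : 0 < Lmin) (hLL : Lmin < Lmax)
    (L : ℝ → ℝ)
    (hL : ∀ t ≥ (0:ℝ), HasDerivAt L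
      (-k₇ * v t * (L t - Lmin) + k₈ * (Lmax - L t)) t)
    (hL0 : L 0 = Lmax) :
    Filter.Tendsto L Filter.atTop (nhds Lmax) := by
  -- continuity of L on [0,∞)
  have hLct : ∀ t ≥ (0:ℝ), ContinuousAt L t := fun t ht => (hL t ht).continuousAt
  -- integrating factor exponent
  have hec : Continuous (fun s : ℝ => Real.exp (k₈ * s)) :=
    Real.continuous_exp.comp (continuous_const.mul continuous_id)
  have hwc : Continuous (fun s => k₇ * v s + k₈) := (continuous_const.mul hvc).add continuous_const
  set φ : ℝ → ℝ := fun t => ∫ s in (0:ℝ)..t, (k₇ * v s + k₈) with hφdef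
  have hφd : ∀ t : ℝ, HasDerivAt φ (k₇ * v t + k₈) t := by
    intro t
    exact integral_hasDerivAt_right (hwc.intervalIntegrable 0 t)
      (hwc.stronglyMeasurableAtFilter _ _) hwc.continuousAt
  -- g = exp φ * (Lmax - L) is monotone on Ici 0, hence L ≤ Lmax on Ici 0
  set g : ℝ → ℝ := fun t => Real.exp (φ t) * (Lmax - L t) with hgdef
  have hgd : ∀ t ≥ (0:ℝ), HasDerivAt g
      (Real.exp (φ t) * (k₇ * v t * (Lmax - Lmin))) t := by
    intro t ht
    have h1 := ((hφd t).exp.mul ((hasDerivAt_const t Lmax).sub (hL t ht)))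
    convert h1 using 1
    · rfl
    · rfl
    · rfl
    · simp only [Pi.sub_apply]; ring
  have hgmono : MonotoneOn g (Set.Ici (0:ℝ)) := by
    apply monotoneOn_of_deriv_nonneg (convex_Ici 0)
    · intro t ht
      exact ((hgd t ht).continuousAt).continuousWithinAt
    · intro t ht
      rw [interior_Ici] at ht
      exact ((hgd t (le_of_lt ht)).differentiableAt).differentiableWithinAt
    · intro t ht
      rw [interior_Ici] at ht
      rw [(hgd t (le_of_lt ht)).deriv]
      have h1 := hvnn t (le_of_lt ht)
      have h2 := (Real.exp_pos (φ t)).le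
      have h3 : 0 ≤ k₇ * v t * (Lmax - Lmin) := by
        apply mul_nonneg (mul_nonneg hk₇.le h1) (by linarith)
      exact mul_nonneg h2 h3
  have hg0 : g 0 = 0 := by simp [hgdef, hL0]
  have hLle : ∀ t ≥ (0:ℝ), L t ≤ Lmax := by
    intro t ht
    have := hgmono (Set.self_mem_Ici) ht ht
    rw [hg0] at this
    simp only [hgdef] at this
    nlinarith [Real.exp_pos (φ t)]
  -- W = exp (k₈ t) * (Lmax - L t)
  set W : ℝ → ℝ := fun t => Real.exp (k₈ * t) * (Lmax - L t) with hWdef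
  have hWd : ∀ t ≥ (0:ℝ), HasDerivAt W
      (Real.exp (k₈ * t) * (k₇ * v t * (L t - Lmin))) t := by
    intro t ht
    have hexp : HasDerivAt (fun s : ℝ => Real.exp (k₈ * s)) (Real.exp (k₈ * t) * k₈) t := by
      simpa [mul_comm] using ((hasDerivAt_id t).const_mul k₈).exp
    have h1 := hexp.mul ((hasDerivAt_const t Lmax).sub (hL t ht))
    convert h1 using 1
    · rfl
    · rfl
    · rfl
    · simp only [Pi.sub_apply]; ring
  -- integrand continuity
  have hIc : ∀ t ≥ (0:ℝ), ContinuousOn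
      (fun s => Real.exp (k₈ * s) * (k₇ * v s * (L s - Lmin))) (Set.uIcc 0 t) := by
    intro t ht
    have huIcc : Set.uIcc (0:ℝ) t ⊆ Set.Ici 0 := by
      rw [Set.uIcc_of_le ht]
      exact Set.Icc_subset_Ici_self
    intro s hs
    exact (((Real.continuous_exp.comp (continuous_const.mul continuous_id)).continuousAt.mul
      (((hvc.continuousAt.const_mul k₇).mul
        ((hLct s (huIcc hs)).sub continuousAt_const)))).continuousWithinAt)
  have hWint : ∀ t ≥ (0:ℝ), W t =
      ∫ s in (0:ℝ)..t, Real.exp (k₈ * s) * (k₇ * v s * (L s - Lmin)) := by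
    intro t ht
    have := integral_eq_sub_of_hasDerivAt (f := W)
      (f' := fun s => Real.exp (k₈ * s) * (k₇ * v s * (L s - Lmin)))
      (fun s hs => hWd s (by
        rw [Set.uIcc_of_le ht] at hs; exact hs.1))
      ((hIc t ht).intervalIntegrable)
    have hW0 : W 0 = 0 := by simp [hWdef, hL0]
    rw [this, hW0, sub_zero]
  -- the sandwich bound
  set F : ℝ → ℝ := fun t => Real.exp (-(k₈ * t)) * ∫ s in (0:ℝ)..t, v s * Real.exp (k₈ * s)
    with hFdef
  have hvexpc : Continuous (fun s => v s * Real.exp (k₈ * s)) := hvc.mul hec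
  have hbound : ∀ t ≥ (0:ℝ), Lmax - L t ≤ k₇ * (Lmax - Lmin) * F t := by
    intro t ht
    have hmono : (∫ s in (0:ℝ)..t, Real.exp (k₈ * s) * (k₇ * v s * (L s - Lmin))) ≤
        ∫ s in (0:ℝ)..t, k₇ * (Lmax - Lmin) * (v s * Real.exp (k₈ * s)) := by
      refine intervalIntegral.integral_mono_on (μ := MeasureTheory.volume) ht
        ((hIc t ht).intervalIntegrable)
        ((continuous_const.mul hvexpc).intervalIntegrable 0 t) ?_
      intro s hs
      have hs0 : (0:ℝ) ≤ s := hs.1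
      have h1 : v s * (L s - Lmin) ≤ v s * (Lmax - Lmin) :=
        mul_le_mul_of_nonneg_left (by linarith [hLle s hs0]) (hvnn s hs0)
      have h2 : (0:ℝ) < Real.exp (k₈ * s) := Real.exp_pos _
      nlinarith [mul_le_mul_of_nonneg_left h1 (mul_nonneg hk₇.le h2.le)]
    have hexp1 : Real.exp (-(k₈ * t)) * Real.exp (k₈ * t) = 1 := by
      rw [← Real.exp_add]; simp
    have hW : Lmax - L t = Real.exp (-(k₈ * t)) * W t := by
      calc Lmax - L t = (Real.exp (-(k₈ * t)) * Real.exp (k₈ * t)) * (Lmax - L t) := by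
            rw [hexp1, one_mul]
        _ = Real.exp (-(k₈ * t)) * W t := by simp only [hWdef]; ring
    rw [hW, hWint t ht, hFdef]
    have h3 : (0:ℝ) < Real.exp (-(k₈ * t)) := Real.exp_pos _
    calc Real.exp (-(k₈ * t)) * ∫ s in (0:ℝ)..t, Real.exp (k₈ * s) * (k₇ * v s * (L s - Lmin))
        ≤ Real.exp (-(k₈ * t)) * ∫ s in (0:ℝ)..t, k₇ * (Lmax - Lmin) * (v s * Real.exp (k₈ * s)) :=
          by apply mul_le_mul_of_nonneg_left hmono h3.le
      _ = k₇ * (Lmax - Lmin) * (Real.exp (-(k₈ * t)) * ∫ s in (0:ℝ)..t, v s * Real.exp (k₈ * s)) := by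
          rw [intervalIntegral.integral_const_mul]; ring
  -- F → 0
  have hF0 : Tendsto F atTop (nhds 0) := by
    rw [Metric.tendsto_atTop]
    intro ε hε
    -- choose T beyond which v ≤ k₈ * ε / 4
    have hsmall : ∀ᶠ s in atTop, v s < k₈ * ε / 4 := by
      have := hv0.eventually (eventually_lt_nhds (by positivity : (0:ℝ) < k₈ * ε / 4))
      simpa using this
    obtain ⟨T₁, hT₁⟩ := eventually_atTop.1 hsmall
    set T : ℝ := max T₁ 0 with hTdef
    have hT0 : (0:ℝ) ≤ T := le_max_right _ _
    set M : ℝ := ∫ s in (0:ℝ)..T, v s * Real.exp (k₈ * s) with hMdef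
    -- exp (-(k₈ t)) * M → 0, so eventually < ε/2
    have hdecay : Tendsto (fun t => Real.exp (-(k₈ * t)) * M) atTop (nhds 0) := by
      have h1 : Tendsto (fun t => Real.exp (-(k₈ * t))) atTop (nhds 0) := by
        have : Tendsto (fun t : ℝ => -(k₈ * t)) atTop atBot := by
          apply tendsto_neg_atBot_iff.mpr
          exact (tendsto_const_mul_atTop_of_pos hk₈).mpr tendsto_id
        exact Real.tendsto_exp_atBot.comp this
      simpa using h1.mul_const M
    have hdecay2 : ∀ᶠ t in atTop, Real.exp (-(k₈ * t)) * M < ε / 2 := by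
      have := hdecay.eventually (eventually_lt_nhds (by positivity : (0:ℝ) < ε / 2))
      simpa using this
    rw [eventually_atTop] at hdecay2
    obtain ⟨T₂, hT₂⟩ := hdecay2
    refine ⟨max T T₂, fun t ht => ?_⟩
    have htT : T ≤ t := le_trans (le_max_left _ _) ht
    have ht0 : (0:ℝ) ≤ t := le_trans hT0 htT
    -- split the integral
    have hint1 : IntervalIntegrable (fun s => v s * Real.exp (k₈ * s)) volume 0 T :=
      hvexpc.intervalIntegrable 0 T
    have hint2 : IntervalIntegrable (fun s => v s * Real.exp (k₈ * s)) volume T t :=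
      hvexpc.intervalIntegrable T t
    have hsplit : (∫ s in (0:ℝ)..t, v s * Real.exp (k₈ * s)) =
        M + ∫ s in T..t, v s * Real.exp (k₈ * s) := by
      rw [hMdef, integral_add_adjacent_intervals hint1 hint2]
    -- bound the tail integral
    have htail : (∫ s in T..t, v s * Real.exp (k₈ * s)) ≤
        ∫ s in T..t, (k₈ * ε / 4) * Real.exp (k₈ * s) := by
      apply intervalIntegral.integral_mono_on htT hint2
        ((continuous_const.mul hec).intervalIntegrable T t)
      intro s hs
      have hvs : v s < k₈ * ε / 4 := hT₁ s (le_trans (le_max_left _ _) hs.1)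
      have : (0:ℝ) < Real.exp (k₈ * s) := Real.exp_pos _
      show v s * Real.exp (k₈ * s) ≤ k₈ * ε / 4 * Real.exp (k₈ * s)
      nlinarith
    have hcalc : (∫ s in T..t, (k₈ * ε / 4) * Real.exp (k₈ * s)) ≤ ε / 4 * Real.exp (k₈ * t) := by
      have hanti : ∀ s ∈ Set.uIcc T t, HasDerivAt (fun u => (ε / 4) * Real.exp (k₈ * u))
          ((k₈ * ε / 4) * Real.exp (k₈ * s)) s := by
        intro s _
        have : HasDerivAt (fun u : ℝ => Real.exp (k₈ * u)) (Real.exp (k₈ * s) * k₈) s := by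
          simpa [mul_comm] using ((hasDerivAt_id s).const_mul k₈).exp
        have := this.const_mul (ε / 4)
        convert this using 1
        · rfl
        · rfl
        · ring
      rw [integral_eq_sub_of_hasDerivAt hanti
        ((continuous_const.mul hec).intervalIntegrable T t)]
      have : (0:ℝ) < Real.exp (k₈ * T) := Real.exp_pos _
      nlinarith
    -- nonnegativity of F t
    have hFnn : 0 ≤ F t := by
      rw [hFdef]
      apply mul_nonneg (Real.exp_pos _).le
      apply intervalIntegral.integral_nonneg ht0
      intro s hs
      exact mul_nonneg (hvnn s hs.1) (Real.exp_pos _).le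
    rw [Real.dist_eq, sub_zero, abs_of_nonneg hFnn]
    have hexppos : (0:ℝ) < Real.exp (-(k₈ * t)) := Real.exp_pos _
    have hFle : F t ≤ Real.exp (-(k₈ * t)) * M + ε / 4 := by
      simp only [hFdef]
      rw [hsplit, mul_add]
      have h5 : Real.exp (-(k₈ * t)) * (∫ s in T..t, v s * Real.exp (k₈ * s)) ≤
          Real.exp (-(k₈ * t)) * (ε / 4 * Real.exp (k₈ * t)) :=
        mul_le_mul_of_nonneg_left (le_trans htail hcalc) hexppos.le
      have h6 : Real.exp (-(k₈ * t)) * (ε / 4 * Real.exp (k₈ * t)) = ε / 4 := by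
        rw [Real.exp_neg]
        field_simp
      linarith
    have h7 : Real.exp (-(k₈ * t)) * M < ε / 2 := hT₂ t (le_trans (le_max_right _ _) ht)
    linarith
  -- conclude by squeezing
  have hsq : Tendsto (fun t => Lmax - L t) atTop (nhds 0) := by
    have hCF : Tendsto (fun t => k₇ * (Lmax - Lmin) * F t) atTop (nhds 0) := by
      simpa using hF0.const_mul (k₇ * (Lmax - Lmin))
    apply tendsto_of_tendsto_of_tendsto_of_le_of_le' tendsto_const_nhds hCF
    · filter_upwards [eventually_ge_atTop (0:ℝ)] with t ht
      linarith [hLle t ht]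
    · filter_upwards [eventually_ge_atTop (0:ℝ)] with t ht
      exact hbound t ht
  have : Tendsto (fun t => Lmax - (Lmax - L t)) atTop (nhds (Lmax - 0)) :=
    tendsto_const_nhds.sub hsq
  simpa using this
end
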